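/- Let η : ℝ^d → (0,∞) be continuous and bounded, and let x : [0,T] → ℝ^d be C². Suppose |ẍ(t) + η(x(t)) ẋ(t)| ≤ M for all t ∈ [0,T]. Then for all t ∈ [0,T], |x(t)| ≤ |x(0)| + t|ẋ(0)| + (1/2) M t². -/

import Mathlib

open MeasureTheory

/-- Integrating-factor estimate: if `ẍ + η(x)ẋ` is bounded by `M` on `[0,T]`, with `η`
continuous, positive and bounded, then `|x(t)| ≤ |x(0)| + t|ẋ(0)| + M t²/2`. -/
theorem motion_map_bound {d : ℕ} (T M Cη : ℝ) (hT : 0 ≤ T)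
    (η : EuclideanSpace ℝ (Fin d) → ℝ) (hηc : Continuous η)
    (hηpos : ∀ y, 0 < η y) (hηbd : ∀ y, η y ≤ Cη)
    (x : ℝ → EuclideanSpace ℝ (Fin d)) (hx : ContDiff ℝ 2 x)
    (hM : ∀ t ∈ Set.Icc (0 : ℝ) T, ‖deriv (deriv x) t + η (x t) • deriv x t‖ ≤ M) :
    ∀ t ∈ Set.Icc (0 : ℝ) T,
      ‖x t‖ ≤ ‖x 0‖ + t * ‖deriv x 0‖ + (1 / 2) * M * t ^ 2 := by
  have hM0 : 0 ≤ M := le_trans (norm_nonneg _) (hM 0 ⟨le_rfl, hT⟩)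
  set v : ℝ → EuclideanSpace ℝ (Fin d) := deriv x with hv_def
  have hxdiff : Differentiable ℝ x := hx.differentiable (by norm_num)
  have hvC1 : ContDiff ℝ 1 v := by
    have h2 : ContDiff ℝ ((1 : ℕ) + 1) x := by exact_mod_cast hx
    exact (contDiff_succ_iff_deriv.mp h2).2.2
  have hvdiff : Differentiable ℝ v := hvC1.differentiable (by norm_num)
  have hvd : ∀ t, HasDerivAt x (v t) t := fun t => (hxdiff t).hasDerivAt
  have had : ∀ t, HasDerivAt v (deriv v t) t := fun t => (hvdiff t).hasDerivAt
  -- Step 1: velocity bound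
  have key : ∀ t ∈ Set.Icc (0 : ℝ) T, ‖v t‖ ≤ ‖v 0‖ + M * t := by
    intro t ht
    have hεb : ∀ ε > (0 : ℝ), ‖v t‖ ≤ ‖v 0‖ + ε + (M + ε) * t := by
      intro ε hε
      set R : ℝ → ℝ := fun s => ‖v 0‖ + ε + (M + ε) * s with hR_def
      have hR' : ∀ s : ℝ, HasDerivAt R (M + ε) s := by
        intro s
        exact (((hasDerivAt_id s).const_mul (M + ε)).const_add (‖v 0‖ + ε)).congr_deriv (by ring)
      have hRpos : ∀ s ∈ Set.Ico (0 : ℝ) T, 0 < R s := by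
        intro s hs
        have : 0 ≤ (M + ε) * s := mul_nonneg (by linarith) hs.1
        have := norm_nonneg (v 0)
        simp only [hR_def]; linarith
      have hB' : ∀ s : ℝ, HasDerivAt (fun r => R r ^ 2) (2 * (M + ε) * R s) s := by
        intro s
        have := (hR' s).pow 2
        exact this.congr_deriv (by ring)
      have hf' : ∀ s : ℝ,
          HasDerivAt (fun r => ‖v r‖ ^ 2) (2 * (inner ℝ (v s) (deriv v s) : ℝ)) s :=
        fun s => (had s).norm_sq
      have main : ∀ ⦃s : ℝ⦄, s ∈ Set.Icc 0 T → ‖v s‖ ^ 2 ≤ R s ^ 2 := by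
        apply image_le_of_deriv_right_lt_deriv_boundary
          (f' := fun s => 2 * (inner ℝ (v s) (deriv v s) : ℝ))
          (hf := (hvC1.continuous.norm.pow 2).continuousOn)
          (hf' := fun s _ => (hf' s).hasDerivWithinAt)
          (hB := hB')
        · have h0 : (0:ℝ) ≤ ‖v 0‖ := norm_nonneg _
          have : ‖v 0‖ ≤ R 0 := by simp only [hR_def]; linarith
          exact pow_le_pow_left₀ h0 this 2
        · intro s hs heq
          have hRs : 0 < R s := hRpos s hs
          have hnv : ‖v s‖ = R s := by
            have h1 : (0:ℝ) ≤ ‖v s‖ := norm_nonneg _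
            simp only [Pi.pow_apply] at heq
            nlinarith [heq]
          have hinner : (inner ℝ (v s) (deriv v s) : ℝ)
              = (inner ℝ (v s) (deriv v s + η (x s) • v s) : ℝ) - η (x s) * ‖v s‖ ^ 2 := by
            rw [inner_add_right, real_inner_smul_right, real_inner_self_eq_norm_sq]
            ring
          have hcs : (inner ℝ (v s) (deriv v s + η (x s) • v s) : ℝ) ≤ ‖v s‖ * M := by
            calc (inner ℝ (v s) (deriv v s + η (x s) • v s) : ℝ)
                ≤ ‖v s‖ * ‖deriv v s + η (x s) • v s‖ := real_inner_le_norm _ _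
              _ ≤ ‖v s‖ * M := by
                  apply mul_le_mul_of_nonneg_left _ (norm_nonneg _)
                  exact hM s ⟨hs.1, hs.2.le⟩
          have hη : 0 ≤ η (x s) * ‖v s‖ ^ 2 :=
            mul_nonneg (hηpos _).le (sq_nonneg _)
          have : (inner ℝ (v s) (deriv v s) : ℝ) ≤ M * R s := by
            rw [hinner]
            calc (inner ℝ (v s) (deriv v s + η (x s) • v s) : ℝ) - η (x s) * ‖v s‖ ^ 2
                ≤ ‖v s‖ * M := by linarith
              _ = M * R s := by rw [hnv]; ring
          nlinarith
      have := main ht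
      have h2 : ‖v t‖ ^ 2 ≤ R t ^ 2 := this
      have hRt : 0 ≤ R t := by
        have h1 : 0 ≤ (M + ε) * t := mul_nonneg (by linarith) ht.1
        have h2 := norm_nonneg (v 0)
        simp only [hR_def]; linarith
      exact (pow_le_pow_iff_left₀ (norm_nonneg _) hRt two_ne_zero).mp h2
    -- let ε → 0
    have h1t : (0:ℝ) < 1 + t := by linarith [ht.1]
    refine le_of_forall_pos_le_add ?_
    intro δ hδ
    have hε : 0 < δ / (1 + t) := div_pos hδ h1t
    have := hεb _ hε
    have hle : ‖v 0‖ + δ / (1 + t) + (M + δ / (1 + t)) * t ≤ ‖v 0‖ + M * t + δ := by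
      have ht0 := ht.1
      have : δ / (1 + t) * (1 + t) = δ := div_mul_cancel₀ δ (ne_of_gt h1t)
      nlinarith [hε.le]
    linarith
  -- Step 2: integrate
  have hB : ∀ s : ℝ, HasDerivAt
      (fun r => ‖x 0‖ + r * ‖v 0‖ + (1 / 2) * M * r ^ 2) (‖v 0‖ + M * s) s := by
    intro s
    have h1 : HasDerivAt (fun r : ℝ => ‖x 0‖ + r * ‖v 0‖) (‖v 0‖) s := by
      simpa using ((hasDerivAt_id s).mul_const ‖v 0‖).const_add (‖x 0‖)
    have h2 : HasDerivAt (fun r : ℝ => (1 / 2) * M * r ^ 2) (M * s) s := by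
      have := (hasDerivAt_pow 2 s).const_mul ((1 / 2) * M)
      exact this.congr_deriv (by ring)
    exact h1.add h2
  intro t ht
  refine image_norm_le_of_norm_deriv_right_le_deriv_boundary
    (f' := v) hx.continuous.continuousOn
    (fun s _ => (hvd s).hasDerivWithinAt) ?_ hB ?_ ht
  · simp
  · intro s hs
    have := key s ⟨hs.1, hs.2.le⟩
    linarith
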